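/- Let n ≥ 3 and let A be an n×n 0-1 matrix of block form [[0_r, X, Z],[0, P, Y],[0, 0, 0_s]] with P a permutation matrix and r, s ≥ 0. If A² is also a 0-1 matrix, then f(A) ≤ γ(n). -/

import Mathlib

open Matrix

/-- A 0-1 matrix over the integers. -/
def IsZeroOne {α β : Type*} (A : Matrix α β ℤ) : Prop :=
  ∀ i j, A i j = 0 ∨ A i j = 1

/-- A permutation matrix. -/
def IsPermMatrix {α : Type*} [DecidableEq α] (P : Matrix α α ℤ) : Prop :=
  ∃ σ : Equiv.Perm α, ∀ i j, P i j = if j = σ i then 1 else 0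

/-- The number of nonzero entries of a matrix. -/
def fcount {α β : Type*} [Fintype α] [Fintype β] (A : Matrix α β ℤ) : ℕ :=
  (Finset.univ.filter fun p : α × β => A p.1 p.2 ≠ 0).card

/-- γ(n) = (n+1)²/4 if n is odd and (n²+2n)/4 if n is even. -/
def gamma (n : ℕ) : ℕ := if Odd n then (n + 1) ^ 2 / 4 else (n ^ 2 + 2 * n) / 4

/-- The block matrix [[0, X, Z],[0, P, Y],[0, 0, 0]] with square zero diagonal blocks. -/
def blockH {α β γ : Type*} (X : Matrix α β ℤ) (P : Matrix β β ℤ)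
    (Y : Matrix β γ ℤ) (Z : Matrix α γ ℤ) : Matrix (α ⊕ β ⊕ γ) (α ⊕ β ⊕ γ) ℤ :=
  Matrix.fromBlocks 0 (Matrix.fromCols X Z) 0 (Matrix.fromBlocks P Y 0 0)

/-! ### Auxiliary lemmas -/

lemma gamma_eq (n : ℕ) : gamma n = (n + 1) ^ 2 / 4 := by
  unfold gamma
  rcases Nat.even_or_odd n with ⟨k, rfl⟩ | h
  · have : ¬ Odd (k + k) := by simp [Nat.odd_iff]; omega
    simp [this]; ring_nf; omega
  · simp [h]

lemma key_aux (r s m : ℕ) (a b : Fin m → ℕ) (ha : ∀ j, a j ≤ r) (hb : ∀ j, b j ≤ s)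
    (hsr : s ≤ r) (hab : ∑ j, a j * b j ≤ r * s) :
    ∑ j, (a j + b j) + r * s + m ≤ (r + m + s + 1) ^ 2 / 4 := by
  have h1 : ∑ j, (a j + b j) ≤ m * r + s := by
    rcases Nat.eq_zero_or_pos r with hr | hr
    · have hs : s = 0 := by omega
      have : ∀ j, a j + b j = 0 := fun j => by have := ha j; have := hb j; omega
      simp [this]
    · have h2 : r * ∑ j, (a j + b j) ≤ r * (m * r + s) := by
        calc r * ∑ j, (a j + b j) = ∑ j, (r * a j + r * b j) := by
              rw [Finset.mul_sum]; exact Finset.sum_congr rfl fun j _ => by ring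
          _ ≤ ∑ j : Fin m, (r * r + a j * b j) := by
              refine Finset.sum_le_sum fun j _ => ?_
              have h1 := ha j; have h2 := (hb j).trans hsr
              nlinarith
          _ = m * (r * r) + ∑ j, a j * b j := by
              rw [Finset.sum_add_distrib, Finset.sum_const, Finset.card_univ]
              simp [mul_comm]
          _ ≤ m * (r * r) + r * s := by omega
          _ = r * (m * r + s) := by ring
      exact Nat.le_of_mul_le_mul_left h2 hr
  have h3 : ∑ j, (a j + b j) + r * s + m ≤ (r + 1) * (m + s) := by
    have : (r + 1) * (m + s) = m * r + s + r * s + m := by ring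
    omega
  refine h3.trans ?_
  rw [Nat.le_div_iff_mul_le (by norm_num)]
  zify; nlinarith [sq_nonneg ((r : ℤ) + 1 - (m + s))]

lemma key (r s m : ℕ) (a b : Fin m → ℕ) (ha : ∀ j, a j ≤ r) (hb : ∀ j, b j ≤ s)
    (hab : ∑ j, a j * b j ≤ r * s) :
    ∑ j, (a j + b j) + r * s + m ≤ (r + m + s + 1) ^ 2 / 4 := by
  rcases le_total s r with h | h
  · exact key_aux r s m a b ha hb h hab
  · have := key_aux s r m b a hb ha h (by
      calc ∑ j, b j * a j = ∑ j, a j * b j := Finset.sum_congr rfl fun j _ => mul_comm _ _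
        _ ≤ r * s := hab
        _ = s * r := mul_comm _ _)
    have e1 : ∑ j, (b j + a j) = ∑ j, (a j + b j) :=
      Finset.sum_congr rfl fun j _ => add_comm _ _
    have e2 : s + m + r + 1 = r + m + s + 1 := by omega
    rw [e1, e2, mul_comm s r] at this
    exact this

lemma fcount_eq {α β : Type*} [Fintype α] [Fintype β] (A : Matrix α β ℤ) :
    fcount A = ∑ i, ∑ j, if A i j ≠ 0 then 1 else 0 := by
  rw [fcount, Finset.card_filter, Fintype.sum_prod_type]

lemma fcount_blockH {r m s : ℕ} (X : Matrix (Fin r) (Fin m) ℤ) (P : Matrix (Fin m) (Fin m) ℤ)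
    (Y : Matrix (Fin m) (Fin s) ℤ) (Z : Matrix (Fin r) (Fin s) ℤ) :
    fcount (blockH X P Y Z) = fcount X + fcount Z + fcount P + fcount Y := by
  simp only [fcount_eq, blockH, Fintype.sum_sum_type, Matrix.fromBlocks_apply₁₁,
    Matrix.fromBlocks_apply₁₂, Matrix.fromBlocks_apply₂₁, Matrix.fromBlocks_apply₂₂,
    Matrix.fromCols_apply_inl, Matrix.fromCols_apply_inr, Matrix.zero_apply]
  simp only [Ne, not_true_eq_false, if_false, ite_false, Finset.sum_const_zero, zero_add, add_zero, Finset.sum_add_distrib]; abel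

lemma fcount_perm {m : ℕ} (P : Matrix (Fin m) (Fin m) ℤ) (hP : IsPermMatrix P) :
    fcount P = m := by
  obtain ⟨σ, hσ⟩ := hP
  simp [fcount_eq, hσ]

lemma fcount_le {α β : Type*} [Fintype α] [Fintype β] (A : Matrix α β ℤ) :
    fcount A ≤ Fintype.card α * Fintype.card β := by
  calc fcount A ≤ (Finset.univ : Finset (α × β)).card := Finset.card_filter_le _ _
    _ = _ := by simp [Finset.card_univ]

lemma fcount_cols {r m : ℕ} (X : Matrix (Fin r) (Fin m) ℤ) :
    fcount X = ∑ j, (Finset.univ.filter fun i => X i j ≠ 0).card := by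
  simp [fcount_eq, Finset.card_filter]
  rw [Finset.sum_comm]

lemma fcount_rows {m s : ℕ} (Y : Matrix (Fin m) (Fin s) ℤ) :
    fcount Y = ∑ j, (Finset.univ.filter fun k => Y j k ≠ 0).card := by
  simp [fcount_eq, Finset.card_filter]

lemma cast_count {N : ℕ} (v : Fin N → ℤ) (hv : ∀ i, v i = 0 ∨ v i = 1) :
    ((Finset.univ.filter fun i => v i ≠ 0).card : ℤ) = ∑ i, v i := by
  rw [Finset.card_filter]
  push_cast
  refine Finset.sum_congr rfl fun i _ => ?_
  rcases hv i with h | h <;> simp [h]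

lemma sq_entry {r m s : ℕ} (X : Matrix (Fin r) (Fin m) ℤ) (P : Matrix (Fin m) (Fin m) ℤ)
    (Y : Matrix (Fin m) (Fin s) ℤ) (Z : Matrix (Fin r) (Fin s) ℤ) (i : Fin r) (k : Fin s) :
    (blockH X P Y Z * blockH X P Y Z) (Sum.inl i) (Sum.inr (Sum.inr k)) =
      ∑ j, X i j * Y j k := by
  rw [Matrix.mul_apply]
  simp [blockH, Fintype.sum_sum_type]

theorem stmt12 {n r m s : ℕ} (hn : 3 ≤ n) (hrms : r + m + s = n)
    (P : Matrix (Fin m) (Fin m) ℤ) (hP : IsPermMatrix P)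
    (X : Matrix (Fin r) (Fin m) ℤ) (Y : Matrix (Fin m) (Fin s) ℤ)
    (Z : Matrix (Fin r) (Fin s) ℤ)
    (hX : IsZeroOne X) (hY : IsZeroOne Y) (hZ : IsZeroOne Z)
    (hsq : IsZeroOne ((blockH X P Y Z) * (blockH X P Y Z))) :
    fcount (blockH X P Y Z) ≤ gamma n := by
  set a : Fin m → ℕ := fun j => (Finset.univ.filter fun i => X i j ≠ 0).card with ha_def
  set b : Fin m → ℕ := fun j => (Finset.univ.filter fun k => Y j k ≠ 0).card with hb_def
  have ha : ∀ j, a j ≤ r := fun j => by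
    calc a j ≤ (Finset.univ : Finset (Fin r)).card := Finset.card_filter_le _ _
      _ = r := by simp
  have hb : ∀ j, b j ≤ s := fun j => by
    calc b j ≤ (Finset.univ : Finset (Fin s)).card := Finset.card_filter_le _ _
      _ = s := by simp
  -- the key constraint: sum of products of column counts of X and row counts of Y
  have hab : ∑ j, a j * b j ≤ r * s := by
    have hcast : (↑(∑ j, a j * b j) : ℤ) ≤ (r * s : ℕ) := by
      push_cast
      have e : ∀ j : Fin m, (a j : ℤ) * (b j : ℤ) = ∑ i, ∑ k, X i j * Y j k := by
        intro j
        rw [show (a j : ℤ) = ∑ i, X i j from cast_count _ (fun i => hX i j),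
            show (b j : ℤ) = ∑ k, Y j k from cast_count _ (fun k => hY j k)]
        rw [Finset.sum_mul]
        refine Finset.sum_congr rfl fun i _ => ?_
        rw [Finset.mul_sum]
      calc ∑ j, (a j : ℤ) * (b j : ℤ) = ∑ j, ∑ i, ∑ k, X i j * Y j k :=
            Finset.sum_congr rfl fun j _ => e j
        _ = ∑ i, ∑ k : Fin s, ∑ j, X i j * Y j k := by
            rw [Finset.sum_comm]
            exact Finset.sum_congr rfl fun i _ => by rw [Finset.sum_comm]
        _ ≤ ∑ _i : Fin r, ∑ _k : Fin s, (1 : ℤ) := by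
            refine Finset.sum_le_sum fun i _ => Finset.sum_le_sum fun k _ => ?_
            have := hsq (Sum.inl i) (Sum.inr (Sum.inr k))
            rw [sq_entry X P Y Z i k] at this
            rcases this with h | h <;> omega
        _ = ((r * s : ℕ) : ℤ) := by push_cast; simp [mul_comm]
    exact_mod_cast hcast
  have hkey := key r s m a b ha hb hab
  have hZc : fcount Z ≤ r * s := by
    have := fcount_le Z; simpa using this
  have hsum : fcount X + fcount Y = ∑ j, (a j + b j) := by
    rw [fcount_cols X, fcount_rows Y, Finset.sum_add_distrib]
  rw [fcount_blockH, fcount_perm P hP, gamma_eq, ← hrms]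
  have : fcount X + fcount Z + m + fcount Y ≤ ∑ j, (a j + b j) + r * s + m := by omega
  exact this.trans hkey
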